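/- If k: (0,∞) → (0,∞) is completely monotone and ξ ≥ 0, and s ↦ k(s)^{1/2} is a Stieltjes function, then the function s ↦ k(s)·exp(−ξ·s·k(s)^{1/2}) is completely monotone. -/

import Mathlib

open MeasureTheory Set
open scoped ENNReal NNReal

def CompletelyMonotone (f : ℝ → ℝ) : Prop :=
  ∀ n : ℕ, ∀ s : ℝ, 0 < s → 0 ≤ (-1 : ℝ) ^ n * iteratedDeriv n f s

def IsStieltjesFun (g : ℝ → ℝ) : Prop :=
  ∃ (A B : ℝ) (σ : Measure ℝ), 0 ≤ A ∧ 0 ≤ B ∧ σ (Set.Iic (0 : ℝ)) = 0 ∧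
    (∫⁻ t, ENNReal.ofReal (1 / (1 + t)) ∂σ) < ⊤ ∧
    ∀ s : ℝ, 0 < s → g s = A / s + B + ∫ t, 1 / (s + t) ∂σ

namespace CMAux

/-- derivative chain on (0,∞) -/
def IsChainOn (G : ℕ → ℝ → ℝ) : Prop := ∀ n, ∀ s : ℝ, 0 < s → HasDerivAt (G n) (G (n+1) s) s

lemma iteratedDeriv_eq_of_chain {f : ℝ → ℝ} {G : ℕ → ℝ → ℝ} (hG : IsChainOn G)
    (h0 : ∀ s : ℝ, 0 < s → f s = G 0 s) : ∀ n, ∀ s : ℝ, 0 < s → iteratedDeriv n f s = G n s := by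
  intro n
  induction n with
  | zero => simpa using h0
  | succ n ih =>
    intro s hs
    rw [iteratedDeriv_succ]
    have hev : iteratedDeriv n f =ᶠ[nhds s] G n := by
      filter_upwards [IsOpen.mem_nhds isOpen_Ioi hs] with x hx
      exact ih x hx
    rw [hev.deriv_eq]
    exact (hG n s hs).deriv

open Finset in
lemma sum_pascal (a b : ℕ → ℝ) (n : ℕ) :
    (∑ i ∈ range (n+1), (n.choose i : ℝ) * (a (i+1) * b (n-i) + a i * b (n+1-i)))
      = ∑ i ∈ range (n+2), ((n+1).choose i : ℝ) * a i * b (n+1-i) := by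
  have hS : (∑ i ∈ range (n+1), (n.choose i : ℝ) * (a (i+1) * b (n-i) + a i * b (n+1-i)))
      = (∑ i ∈ range (n+1), (n.choose i : ℝ) * a (i+1) * b (n-i))
        + ∑ i ∈ range (n+1), (n.choose i : ℝ) * a i * b (n+1-i) := by
    rw [← Finset.sum_add_distrib]
    exact Finset.sum_congr rfl fun i _ => by ring
  have hR : (∑ i ∈ range (n+2), ((n+1).choose i : ℝ) * a i * b (n+1-i))
      = (∑ i ∈ range (n+1), (n.choose i : ℝ) * a (i+1) * b (n-i))
        + ((∑ i ∈ range (n+1), (n.choose (i+1) : ℝ) * a (i+1) * b (n-i)) + a 0 * b (n+1)) := by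
    rw [Finset.sum_range_succ' (fun i => ((n+1).choose i : ℝ) * a i * b (n+1-i)) (n+1)]
    simp only [Nat.choose_succ_succ, Nat.succ_sub_succ, Nat.choose_zero_right, Nat.cast_add,
      Nat.cast_one, Nat.succ_eq_add_one, Nat.sub_zero]
    have : ∀ i ∈ range (n+1), ((n.choose i : ℝ) + (n.choose (i+1) : ℝ)) * a (i+1) * b (n-i)
        = (n.choose i : ℝ) * a (i+1) * b (n-i) + (n.choose (i+1) : ℝ) * a (i+1) * b (n-i) := by
      intro i _; ring
    rw [Finset.sum_congr rfl this, Finset.sum_add_distrib]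
    ring
  have h2 : (∑ i ∈ range (n+1), (n.choose i : ℝ) * a i * b (n+1-i))
      = (∑ i ∈ range (n+1), (n.choose (i+1) : ℝ) * a (i+1) * b (n-i)) + a 0 * b (n+1) := by
    rw [Finset.sum_range_succ' (fun i => (n.choose i : ℝ) * a i * b (n+1-i)) n]
    rw [Finset.sum_range_succ (fun i => (n.choose (i+1) : ℝ) * a (i+1) * b (n-i)) n]
    simp only [Nat.succ_sub_succ, Nat.choose_zero_right, Nat.cast_one, Nat.choose_succ_self,
      Nat.cast_zero, Nat.sub_self, Nat.sub_zero]
    ring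
  rw [hS, hR, h2]

noncomputable def mulChain (A B : ℕ → ℝ → ℝ) (n : ℕ) (s : ℝ) : ℝ :=
  ∑ i ∈ Finset.range (n+1), (n.choose i : ℝ) * A i s * B (n-i) s

lemma mulChain_hasDerivAt {A B : ℕ → ℝ → ℝ} {n : ℕ} {s : ℝ}
    (hA : ∀ i, i ≤ n → HasDerivAt (A i) (A (i+1) s) s)
    (hB : ∀ i, i ≤ n → HasDerivAt (B i) (B (i+1) s) s) :
    HasDerivAt (mulChain A B n) (mulChain A B (n+1) s) s := by
  have key : HasDerivAt (mulChain A B n)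
      (∑ i ∈ Finset.range (n+1),
        (n.choose i : ℝ) * (A (i+1) s * B (n-i) s + A i s * B (n+1-i) s)) s := by
    unfold mulChain
    apply HasDerivAt.fun_sum
    intro i hi
    have hi' : i ≤ n := Nat.lt_succ_iff.mp (Finset.mem_range.mp hi)
    have h1 := ((hA i hi').mul (hB (n-i) (Nat.sub_le n i))).const_mul ((n.choose i : ℝ))
    have h2 : n - i + 1 = n + 1 - i := by omega
    rw [h2] at h1
    simpa only [mul_assoc, Pi.mul_apply] using h1
  have := sum_pascal (fun i => A i s) (fun i => B i s) n
  rw [this] at key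
  exact key

lemma sign_sum {a b : ℕ → ℝ} {n : ℕ} (ha : ∀ i, i ≤ n → 0 ≤ (-1:ℝ)^i * a i)
    (hb : ∀ i, i ≤ n → 0 ≤ (-1:ℝ)^i * b i) :
    0 ≤ (-1:ℝ)^n * ∑ i ∈ Finset.range (n+1), (n.choose i : ℝ) * a i * b (n-i) := by
  rw [Finset.mul_sum]
  apply Finset.sum_nonneg
  intro i hi
  have hi' : i ≤ n := Nat.lt_succ_iff.mp (Finset.mem_range.mp hi)
  have hpow : (-1:ℝ)^n = (-1)^i * (-1)^(n-i) := by
    rw [← pow_add, Nat.add_sub_cancel' hi']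
  have heq : (-1:ℝ)^n * ((n.choose i : ℝ) * a i * b (n-i))
      = (n.choose i : ℝ) * (((-1:ℝ)^i * a i) * ((-1:ℝ)^(n-i) * b (n-i))) := by
    rw [hpow]; ring
  rw [heq]
  exact mul_nonneg (Nat.cast_nonneg _)
    (mul_nonneg (ha i hi') (hb (n-i) (Nat.sub_le _ _)))

noncomputable def expChain (U : ℕ → ℝ → ℝ) : ℕ → ℝ → ℝ
  | 0 => fun s => Real.exp (-(U 0 s))
  | (n+1) => fun s => -∑ i ∈ Finset.range (n+1), (n.choose i : ℝ) * U (i+1) s * expChain U (n-i) s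
  termination_by n => n
  decreasing_by exact Nat.lt_succ_of_le (Nat.sub_le n i)

lemma expChain_zero (U : ℕ → ℝ → ℝ) :
    expChain U 0 = fun s => Real.exp (-(U 0 s)) := by
  rw [expChain]

lemma expChain_succ (U : ℕ → ℝ → ℝ) (n : ℕ) :
    expChain U (n+1) = fun s => -(mulChain (fun i => U (i+1)) (expChain U) n s) := by
  rw [expChain]; rfl

lemma expChain_hasDerivAt {U : ℕ → ℝ → ℝ} (hU : IsChainOn U) : IsChainOn (expChain U) := by
  intro n
  induction n using Nat.strong_induction_on with
  | _ n ih =>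
    intro s hs
    match n with
    | 0 =>
      have h := ((hU 0 s hs).neg).exp
      have he : expChain U 1 s = Real.exp (-(U 0 s)) * -(U 1 s) := by
        rw [expChain_succ]
        simp [mulChain, expChain_zero]
        ring
      rw [expChain_zero, he]
      exact h
    | (m+1) =>
      have hmul : HasDerivAt (mulChain (fun i => U (i+1)) (expChain U) m)
          (mulChain (fun i => U (i+1)) (expChain U) (m+1) s) s := by
        apply mulChain_hasDerivAt
        · intro i _; exact hU (i+1) s hs
        · intro i hi; exact ih i (Nat.lt_succ_of_le hi) s hs
      rw [expChain_succ, expChain_succ]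
      exact hmul.neg

lemma expChain_sign {U : ℕ → ℝ → ℝ} {s : ℝ}
    (hU : ∀ i, 0 ≤ (-1:ℝ)^i * U (i+1) s) :
    ∀ n, 0 ≤ (-1:ℝ)^n * expChain U n s := by
  intro n
  induction n using Nat.strong_induction_on with
  | _ n ih =>
    match n with
    | 0 => simpa [expChain_zero] using (Real.exp_nonneg (-(U 0 s)))
    | (m+1) =>
      rw [expChain_succ]
      have : (-1:ℝ)^(m+1) * -(mulChain (fun i => U (i+1)) (expChain U) m s)
          = (-1:ℝ)^m * mulChain (fun i => U (i+1)) (expChain U) m s := by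
        rw [pow_succ]; ring
      rw [this]
      exact sign_sum (fun i _ => hU i) (fun i hi => ih i (Nat.lt_succ_of_le hi))

variable {σ : Measure ℝ}

lemma ae_pos (hσ0 : σ (Set.Iic 0) = 0) : ∀ᵐ t ∂σ, 0 < t := by
  rw [ae_iff]
  have h : {t : ℝ | ¬ 0 < t} = Set.Iic 0 := by ext t; simp [not_lt]
  rw [h]; exact hσ0

lemma integrable_of_bound (hσfin : (∫⁻ t, ENNReal.ofReal (1/(1+t)) ∂σ) < ⊤)
    {f : ℝ → ℝ} (hf : AEStronglyMeasurable f σ) {K : ℝ} (hK : 0 ≤ K)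
    (hb : ∀ᵐ t ∂σ, ‖f t‖ ≤ K * (1/(1+t))) : Integrable f σ := by
  refine ⟨hf, ?_⟩
  show (∫⁻ t, (‖f t‖₊ : ℝ≥0∞) ∂σ) < ⊤
  have hle : (∫⁻ t, (‖f t‖₊ : ℝ≥0∞) ∂σ) ≤ ∫⁻ t, ENNReal.ofReal K * ENNReal.ofReal (1/(1+t)) ∂σ := by
    apply lintegral_mono_ae
    filter_upwards [hb] with t ht
    calc (‖f t‖₊ : ℝ≥0∞) = ENNReal.ofReal ‖f t‖ := (ofReal_norm_eq_enorm _).symm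
    _ ≤ ENNReal.ofReal (K * (1/(1+t))) := ENNReal.ofReal_le_ofReal ht
    _ = ENNReal.ofReal K * ENNReal.ofReal (1/(1+t)) := ENNReal.ofReal_mul hK
  refine lt_of_le_of_lt hle ?_
  rw [lintegral_const_mul' _ _ ENNReal.ofReal_ne_top]
  exact ENNReal.mul_lt_top ENNReal.ofReal_lt_top hσfin

lemma one_div_bound {s : ℝ} (hs : 0 < s) (m : ℕ) {t : ℝ} (ht : 0 < t) :
    ((s+t)^(m+1))⁻¹ ≤ (max 1 s⁻¹ * (s^m)⁻¹) * (1/(1+t)) := by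
  have hst : 0 < s + t := by linarith
  have h1t : (0:ℝ) < 1 + t := by linarith
  have hsm : 0 < s^m := pow_pos hs m
  have hmaxpos : 0 < max 1 s⁻¹ := lt_of_lt_of_le one_pos (le_max_left _ _)
  have hinvs : s⁻¹ * s = 1 := inv_mul_cancel₀ hs.ne'
  have h1 : 1 + t ≤ max 1 s⁻¹ * (s + t) := by
    rcases le_or_gt 1 s with h | h
    · nlinarith [le_max_left (1:ℝ) s⁻¹]
    · have hip : 0 < s⁻¹ := inv_pos.2 hs
      have hinv : 1 ≤ s⁻¹ := by nlinarith
      have hmax : max 1 s⁻¹ = s⁻¹ := max_eq_right hinv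
      rw [hmax]
      nlinarith
  have h2 : s^m * (s+t) ≤ (s+t)^(m+1) := by
    have hp : s^m ≤ (s+t)^m := pow_le_pow_left₀ hs.le (by linarith) m
    calc s^m * (s+t) ≤ (s+t)^m * (s+t) := by nlinarith
    _ = (s+t)^(m+1) := (pow_succ _ _).symm
  have key : s^m * (1+t) ≤ max 1 s⁻¹ * (s+t)^(m+1) := by
    calc s^m * (1+t) ≤ s^m * (max 1 s⁻¹ * (s+t)) := by nlinarith
    _ = max 1 s⁻¹ * (s^m * (s+t)) := by ring
    _ ≤ max 1 s⁻¹ * (s+t)^(m+1) := by nlinarith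
  have hq : s^m * (1+t) / max 1 s⁻¹ ≤ (s+t)^(m+1) := by
    rw [div_le_iff₀ hmaxpos]; nlinarith
  have hqpos : 0 < s^m * (1+t) / max 1 s⁻¹ := by positivity
  have hinv2 := inv_anti₀ hqpos hq
  refine le_trans hinv2 (le_of_eq ?_)
  field_simp

lemma meas_aux (s : ℝ) (m : ℕ) : Measurable (fun t : ℝ => ((s+t)^(m+1))⁻¹) :=
  ((measurable_id.const_add s).pow_const (m+1)).inv

lemma integrable_base (hσ0 : σ (Set.Iic 0) = 0)
    (hσfin : (∫⁻ t, ENNReal.ofReal (1/(1+t)) ∂σ) < ⊤) :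
    Integrable (fun t => 1/(1+t)) σ := by
  have hm : Measurable (fun t : ℝ => 1/(1+t)) := by
    simp only [one_div]; exact (measurable_id.const_add (1:ℝ)).inv
  apply integrable_of_bound hσfin hm.aestronglyMeasurable (K := 1) zero_le_one
  filter_upwards [ae_pos hσ0] with t ht
  rw [Real.norm_eq_abs, abs_of_nonneg (by positivity), one_mul]

lemma integrable_aux (hσ0 : σ (Set.Iic 0) = 0)
    (hσfin : (∫⁻ t, ENNReal.ofReal (1/(1+t)) ∂σ) < ⊤)
    (m : ℕ) {s : ℝ} (hs : 0 < s) : Integrable (fun t => ((s+t)^(m+1))⁻¹) σ := by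
  apply integrable_of_bound hσfin (meas_aux s m).aestronglyMeasurable
    (K := max 1 s⁻¹ * (s^m)⁻¹) (by positivity)
  filter_upwards [ae_pos hσ0] with t ht
  rw [Real.norm_eq_abs, abs_of_nonneg (by positivity)]
  exact one_div_bound hs m ht

lemma hasDerivAt_integral (hσ0 : σ (Set.Iic 0) = 0)
    (hσfin : (∫⁻ t, ENNReal.ofReal (1/(1+t)) ∂σ) < ⊤)
    (m : ℕ) {s : ℝ} (hs : 0 < s) :
    HasDerivAt (fun x => ∫ t, ((x+t)^(m+1))⁻¹ ∂σ)
      (-((m:ℝ)+1) * ∫ t, ((s+t)^(m+2))⁻¹ ∂σ) s := by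
  have h2 : (0:ℝ) < s/2 := by linarith
  set K := max 1 (s/2)⁻¹ * ((s/2)^(m+1))⁻¹ with hK
  have hKpos : 0 ≤ K := by positivity
  have res := hasDerivAt_integral_of_dominated_loc_of_deriv_le (μ := σ)
    (F := fun (x : ℝ) (t : ℝ) => ((x+t)^(m+1))⁻¹)
    (F' := fun (x : ℝ) (t : ℝ) => -((m:ℝ)+1) * ((x+t)^(m+2))⁻¹)
    (bound := fun t => ((m:ℝ)+1) * (K * (1/(1+t)))) (Metric.ball_mem_nhds s h2)
    (Filter.Eventually.of_forall fun x => (meas_aux x m).aestronglyMeasurable)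
    (integrable_aux hσ0 hσfin m hs)
    (((meas_aux s (m+1)).const_mul _).aestronglyMeasurable)
    ?_ ?_ ?_
  · rw [← MeasureTheory.integral_const_mul]; exact res.2
  · -- bound
    filter_upwards [ae_pos hσ0] with t ht
    intro x hx
    have hx2 : s/2 < x := by
      have := Metric.mem_ball.mp hx
      rw [Real.dist_eq, abs_lt] at this
      linarith [this.1]
    have hxt : (0:ℝ) < x + t := by linarith
    have hmono : ((x+t)^(m+2))⁻¹ ≤ ((s/2+t)^(m+2))⁻¹ := by
      apply inv_anti₀ (pow_pos (by linarith) _)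
      exact pow_le_pow_left₀ (by linarith) (by linarith) _
    have hb' : ((s/2+t)^(m+2))⁻¹ ≤ K * (1/(1+t)) := by
      rw [hK]; exact one_div_bound h2 (m+1) ht
    have hm1 : (0:ℝ) ≤ (m:ℝ)+1 := by positivity
    rw [Real.norm_eq_abs, abs_mul, abs_of_nonpos (by push_cast; linarith), abs_of_nonneg (by positivity), neg_neg]
    calc ((m:ℝ)+1) * ((x+t)^(m+2))⁻¹ ≤ ((m:ℝ)+1) * ((s/2+t)^(m+2))⁻¹ :=
          mul_le_mul_of_nonneg_left hmono hm1
    _ ≤ ((m:ℝ)+1) * (K * (1/(1+t))) := mul_le_mul_of_nonneg_left hb' hm1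
  · exact ((integrable_base hσ0 hσfin).const_mul K).const_mul ((m:ℝ)+1)
  · filter_upwards [ae_pos hσ0] with t ht
    intro x hx
    have hx2 : s/2 < x := by
      have := Metric.mem_ball.mp hx
      rw [Real.dist_eq, abs_lt] at this
      linarith [this.1]
    have hxt : (0:ℝ) < x + t := by linarith
    have hne : x + t ≠ 0 := hxt.ne'
    have h1 : HasDerivAt (fun y : ℝ => y + t) 1 x := (hasDerivAt_id x).add_const t
    have h3 := (h1.pow (m+1)).inv (pow_ne_zero _ hne)
    convert h3 using 1
    · rfl
    · rfl
    simp only [Nat.add_sub_cancel, mul_one, Pi.pow_apply]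
    push_cast
    field_simp
    ring


noncomputable def Gfun (A B : ℝ) (σ : Measure ℝ) (n : ℕ) (s : ℝ) : ℝ :=
  (-1:ℝ)^n * (n.factorial : ℝ) * (A * (s^(n+1))⁻¹ + ∫ t, ((s+t)^(n+1))⁻¹ ∂σ)
    + (if n = 0 then B else 0)

lemma Gfun_chain {A B : ℝ} {σ : Measure ℝ} (hσ0 : σ (Set.Iic 0) = 0)
    (hσfin : (∫⁻ t, ENNReal.ofReal (1/(1+t)) ∂σ) < ⊤) : IsChainOn (Gfun A B σ) := by
  intro n s hs
  have hsne : s ≠ 0 := hs.ne'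
  have hpow : HasDerivAt (fun x : ℝ => (x^(n+1))⁻¹) (-((n:ℝ)+1) * (s^(n+2))⁻¹) s := by
    have h := (hasDerivAt_pow (n+1) s).inv (pow_ne_zero _ hsne)
    convert h using 1
    · rfl
    · rfl
    · rfl
    simp only [Nat.add_sub_cancel]
    push_cast
    field_simp
    ring
  have hint := hasDerivAt_integral hσ0 hσfin n hs
  have hmain := ((hpow.const_mul A).add hint).const_mul ((-1:ℝ)^n * (n.factorial:ℝ))
  have hfin := hmain.add_const (if n = 0 then B else 0)
  have heq : Gfun A B σ (n+1) s
      = (-1:ℝ)^n * (n.factorial:ℝ) * (A * (-((n:ℝ)+1) * (s^(n+2))⁻¹)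
          + -((n:ℝ)+1) * ∫ t, ((s+t)^(n+2))⁻¹ ∂σ) := by
    simp only [Gfun, if_neg (Nat.succ_ne_zero n), add_zero, Nat.factorial_succ]
    push_cast
    rw [show (-1:ℝ)^(n+1) = -(-1)^n from by rw [pow_succ]; ring]
    ring
  rw [show Gfun A B σ n = fun x => (-1:ℝ)^n * (n.factorial:ℝ)
      * (A * (x^(n+1))⁻¹ + ∫ t, ((x+t)^(n+1))⁻¹ ∂σ) + (if n = 0 then B else 0) from rfl, heq]
  exact hfin

lemma integral_diff_nonneg {σ : Measure ℝ} (hσ0 : σ (Set.Iic 0) = 0)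
    (hσfin : (∫⁻ t, ENNReal.ofReal (1/(1+t)) ∂σ) < ⊤) (i : ℕ) {s : ℝ} (hs : 0 < s) :
    0 ≤ (∫ t, ((s+t)^(i+1))⁻¹ ∂σ) - s * ∫ t, ((s+t)^(i+2))⁻¹ ∂σ := by
  have hf := integrable_aux hσ0 hσfin i hs
  have hg := (integrable_aux hσ0 hσfin (i+1) hs).const_mul s
  have heq : (∫ t, ((s+t)^(i+1))⁻¹ ∂σ) - s * ∫ t, ((s+t)^(i+2))⁻¹ ∂σ
      = ∫ t, (((s+t)^(i+1))⁻¹ - s * ((s+t)^(i+2))⁻¹) ∂σ := by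
    rw [integral_sub hf hg, MeasureTheory.integral_const_mul]
  rw [heq]
  apply integral_nonneg_of_ae
  filter_upwards [ae_pos hσ0] with t ht
  have hst : 0 < s + t := by linarith
  have h1 : ((s+t)^(i+1))⁻¹ = (s+t) * ((s+t)^(i+2))⁻¹ := by
    rw [show (i:ℕ)+2 = (i+1)+1 from rfl, pow_succ]
    field_simp
    ring
  have hinv : (0:ℝ) ≤ ((s+t)^(i+2))⁻¹ := by positivity
  rw [h1]
  have h2 : (s+t) * ((s+t)^(i+2))⁻¹ - s * ((s+t)^(i+2))⁻¹ = t * ((s+t)^(i+2))⁻¹ := by ring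
  rw [h2]
  exact mul_nonneg ht.le hinv

noncomputable def Ufun (ξ A B : ℝ) (σ : Measure ℝ) : ℕ → ℝ → ℝ
  | 0 => fun s => ξ * (s * Gfun A B σ 0 s)
  | (n+1) => fun s => ξ * (s * Gfun A B σ (n+1) s + ((n:ℝ)+1) * Gfun A B σ n s)

lemma Ufun_chain {ξ A B : ℝ} {σ : Measure ℝ} (hσ0 : σ (Set.Iic 0) = 0)
    (hσfin : (∫⁻ t, ENNReal.ofReal (1/(1+t)) ∂σ) < ⊤) : IsChainOn (Ufun ξ A B σ) := by
  have hG := Gfun_chain (A := A) (B := B) hσ0 hσfin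
  intro n s hs
  match n with
  | 0 =>
    have h := ((hasDerivAt_id s).mul (hG 0 s hs)).const_mul ξ
    have heq : Ufun ξ A B σ 1 s = ξ * (1 * Gfun A B σ 0 s + s * Gfun A B σ 1 s) := by
      show ξ * (s * Gfun A B σ 1 s + (((0:ℕ):ℝ)+1) * Gfun A B σ 0 s) = _
      push_cast
      ring
    rw [show Ufun ξ A B σ 0 = fun x => ξ * (x * Gfun A B σ 0 x) from rfl, heq]
    simpa using h
  | (m+1) =>
    have h := (((hasDerivAt_id s).mul (hG (m+1) s hs)).add
      ((hG m s hs).const_mul ((m:ℝ)+1))).const_mul ξ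
    have heq : Ufun ξ A B σ (m+2) s
        = ξ * ((1 * Gfun A B σ (m+1) s + s * Gfun A B σ (m+2) s)
            + ((m:ℝ)+1) * Gfun A B σ (m+1) s) := by
      show ξ * (s * Gfun A B σ (m+2) s + ((((m+1:ℕ)):ℝ)+1) * Gfun A B σ (m+1) s) = _
      push_cast
      ring
    rw [show Ufun ξ A B σ (m+1) = fun x => ξ * (x * Gfun A B σ (m+1) x
        + ((m:ℝ)+1) * Gfun A B σ m x) from rfl, heq]
    simpa using h

lemma Ufun_sign {ξ A B : ℝ} {σ : Measure ℝ} (hA : 0 ≤ A) (hB : 0 ≤ B) (hξ : 0 ≤ ξ)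
    (hσ0 : σ (Set.Iic 0) = 0)
    (hσfin : (∫⁻ t, ENNReal.ofReal (1/(1+t)) ∂σ) < ⊤) {s : ℝ} (hs : 0 < s) (i : ℕ) :
    0 ≤ (-1:ℝ)^i * Ufun ξ A B σ (i+1) s := by
  have hsne : s ≠ 0 := hs.ne'
  have key := integral_diff_nonneg hσ0 hσfin i hs
  set I1 := ∫ t, ((s+t)^(i+1))⁻¹ ∂σ with hI1
  set I2 := ∫ t, ((s+t)^(i+2))⁻¹ ∂σ with hI2
  have hU : Ufun ξ A B σ (i+1) s
      = ξ * (s * Gfun A B σ (i+1) s + ((i:ℝ)+1) * Gfun A B σ i s) := rfl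
  have hG1 : Gfun A B σ (i+1) s = (-1:ℝ)^(i+1) * ((i+1).factorial:ℝ) * (A * (s^(i+2))⁻¹ + I2) := by
    simp only [Gfun, if_neg (Nat.succ_ne_zero i), add_zero, hI2]
  have hG0 : Gfun A B σ i s = (-1:ℝ)^i * (i.factorial:ℝ) * (A * (s^(i+1))⁻¹ + I1)
      + (if i = 0 then B else 0) := rfl
  have hsa : s * (A * (s^(i+2))⁻¹) = A * (s^(i+1))⁻¹ := by
    rw [show (i:ℕ)+2 = (i+1)+1 from rfl, pow_succ]
    field_simp
  have hfac : (((i+1)).factorial:ℝ) = ((i:ℝ)+1) * (i.factorial:ℝ) := by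
    rw [Nat.factorial_succ]; push_cast; ring
  have hpow2 : (-1:ℝ)^i * (-1:ℝ)^i = 1 := by
    rw [← pow_add]; exact Even.neg_one_pow ⟨i, rfl⟩
  have hfacpos : (0:ℝ) ≤ (i.factorial:ℝ) := Nat.cast_nonneg _
  have hiif : (-1:ℝ)^i * (if i = 0 then B else 0) = (if i = 0 then B else 0) := by
    by_cases hi : i = 0 <;> simp [hi]
  have hc : (0:ℝ) ≤ (if i = 0 then B else 0) := by
    by_cases hi : i = 0 <;> simp [hi, hB]
  have final : (-1:ℝ)^i * Ufun ξ A B σ (i+1) s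
      = ξ * ((((i:ℝ)+1) * (i.factorial:ℝ)) * (I1 - s * I2)
          + ((i:ℝ)+1) * (if i = 0 then B else 0)) := by
    rw [hU, hG1, hG0, hfac,
      show (-1:ℝ)^(i+1) = -(-1)^i from by rw [pow_succ]; ring]
    linear_combination (ξ * (((i:ℝ)+1) * (i.factorial:ℝ))
        * (A * (s^(i+1))⁻¹ + I1 - s * I2 - s * (A * (s^(i+2))⁻¹))) * hpow2
      - (ξ * (((i:ℝ)+1) * (i.factorial:ℝ))) * hsa
      + (ξ * ((i:ℝ)+1)) * hiif
  rw [final]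
  apply mul_nonneg hξ
  apply add_nonneg
  · apply mul_nonneg (by positivity)
    linarith [key]
  · apply mul_nonneg (by positivity) hc

end CMAux

/-- If `k : (0,∞) → (0,∞)` is completely monotone, `ξ ≥ 0`, and `s ↦ k(s)^{1/2}` is a
Stieltjes function, then `s ↦ k(s)·exp(−ξ·s·k(s)^{1/2})` is completely monotone. -/
theorem completelyMonotone_kernel (k : ℝ → ℝ) (ξ : ℝ)
    (hkpos : ∀ s : ℝ, 0 < s → 0 < k s)
    (hk : CompletelyMonotone k) (hξ : 0 ≤ ξ)
    (hsqrt : IsStieltjesFun (fun s => Real.sqrt (k s))) :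
    CompletelyMonotone (fun s => k s * Real.exp (-ξ * s * Real.sqrt (k s))) := by
  obtain ⟨A, B, σ, hA, hB, hσ0, hσfin, hrep⟩ := hsqrt
  intro n s hs
  have hGchain : CMAux.IsChainOn (CMAux.Gfun A B σ) := CMAux.Gfun_chain hσ0 hσfin
  have hG0 : ∀ x : ℝ, 0 < x → Real.sqrt (k x) = CMAux.Gfun A B σ 0 x := by
    intro x hx
    have h := hrep x hx
    simp only at h
    rw [h]
    simp only [CMAux.Gfun, pow_zero, pow_one, zero_add, Nat.factorial_zero, Nat.cast_one,
      one_mul, if_pos rfl, if_true, eq_self_iff_true, one_div, div_eq_mul_inv]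
    ring
  have hKdchain : CMAux.IsChainOn (CMAux.mulChain (CMAux.Gfun A B σ) (CMAux.Gfun A B σ)) :=
    fun m x hx => CMAux.mulChain_hasDerivAt (fun i _ => hGchain i x hx) (fun i _ => hGchain i x hx)
  have hk0 : ∀ x : ℝ, 0 < x →
      k x = CMAux.mulChain (CMAux.Gfun A B σ) (CMAux.Gfun A B σ) 0 x := by
    intro x hx
    have h1 : Real.sqrt (k x) * Real.sqrt (k x) = k x := Real.mul_self_sqrt (hkpos x hx).le
    rw [← h1, hG0 x hx]
    simp [CMAux.mulChain]
  have hKs := CMAux.iteratedDeriv_eq_of_chain hKdchain hk0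
  have hKsign : ∀ m : ℕ, ∀ x : ℝ, 0 < x →
      0 ≤ (-1:ℝ)^m * CMAux.mulChain (CMAux.Gfun A B σ) (CMAux.Gfun A B σ) m x := by
    intro m x hx
    rw [← hKs m x hx]
    exact hk m x hx
  have hUchain : CMAux.IsChainOn (CMAux.Ufun ξ A B σ) := CMAux.Ufun_chain hσ0 hσfin
  have hEchain := CMAux.expChain_hasDerivAt hUchain
  have hEsign : ∀ x : ℝ, 0 < x → ∀ m : ℕ,
      0 ≤ (-1:ℝ)^m * CMAux.expChain (CMAux.Ufun ξ A B σ) m x :=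
    fun x hx => CMAux.expChain_sign (fun i => CMAux.Ufun_sign hA hB hξ hσ0 hσfin hx i)
  have hPchain : CMAux.IsChainOn (CMAux.mulChain
      (CMAux.mulChain (CMAux.Gfun A B σ) (CMAux.Gfun A B σ))
      (CMAux.expChain (CMAux.Ufun ξ A B σ))) :=
    fun m x hx => CMAux.mulChain_hasDerivAt (fun i _ => hKdchain i x hx)
      (fun i _ => hEchain i x hx)
  have hF0 : ∀ x : ℝ, 0 < x → (fun s => k s * Real.exp (-ξ * s * Real.sqrt (k s))) x
      = CMAux.mulChain (CMAux.mulChain (CMAux.Gfun A B σ) (CMAux.Gfun A B σ))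
          (CMAux.expChain (CMAux.Ufun ξ A B σ)) 0 x := by
    intro x hx
    simp only
    have hE0 : CMAux.expChain (CMAux.Ufun ξ A B σ) 0 x = Real.exp (-(CMAux.Ufun ξ A B σ 0 x)) := by
      rw [CMAux.expChain_zero]
    have hU0 : CMAux.Ufun ξ A B σ 0 x = ξ * (x * CMAux.Gfun A B σ 0 x) := rfl
    have hP0 : CMAux.mulChain (CMAux.mulChain (CMAux.Gfun A B σ) (CMAux.Gfun A B σ))
        (CMAux.expChain (CMAux.Ufun ξ A B σ)) 0 x
        = CMAux.mulChain (CMAux.Gfun A B σ) (CMAux.Gfun A B σ) 0 x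
          * CMAux.expChain (CMAux.Ufun ξ A B σ) 0 x := by
      simp [CMAux.mulChain]
    rw [hP0, ← hk0 x hx, hE0, hU0, ← hG0 x hx]
    congr 1
    congr 1
    ring
  have hit := CMAux.iteratedDeriv_eq_of_chain hPchain hF0
  rw [hit n s hs]
  exact CMAux.sign_sum (fun i _ => hKsign i s hs) (fun i _ => hEsign s hs i)
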